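/- arXiv:1201.2048 — 3 statements merged into one kernel-verified Lean document; each statement's English description precedes it below -/
import Mathlib

section
/- Let ν ≥ 1 and r ≥ 2 be a natural number, and n ≥ 1. Then there exists a constant B > 0 depending only on n and r such that for every multi-index α ∈ ℤ₊ⁿ, the sum over decompositions α = α' + α'' of (α!/(α'!α''!)) · ({(α'-r)!}^ν {(α''-r)!}^ν / {(α-r)!}^ν) is bounded by B. -/
open Finset

namespace MorimotoAux

lemma fact_ratio_le {r m k : ℕ} (hk : k ≤ m) :
    (k - r).factorial * ((m - k) - r).factorial ≤ (m - r).factorial := by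
  calc (k - r).factorial * ((m - k) - r).factorial
      ≤ ((k - r) + ((m - k) - r)).factorial :=
        Nat.le_of_dvd (Nat.factorial_pos _)
          (Nat.factorial_mul_factorial_dvd_factorial_add _ _)
    _ ≤ (m - r).factorial := Nat.factorial_le (by omega)

/-- The 1-D summand. -/
noncomputable def T (r m k : ℕ) : ℝ :=
  (m.choose k : ℝ) * (((k - r).factorial : ℝ) * (((m - k) - r).factorial : ℝ) /
    ((m - r).factorial : ℝ))

/-- The constant. -/
def Kn (r : ℕ) : ℕ := (9 * r) ^ 2 * (8 * r).factorial * 2 ^ (18 * r)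

lemma Kn_pos (r : ℕ) (hr : 2 ≤ r) : 0 < Kn r := by
  unfold Kn; positivity

lemma T_nonneg (r m k : ℕ) : 0 ≤ T r m k := by
  unfold T; positivity

lemma T_symm {r m k : ℕ} (hk : k ≤ m) : T r m (m - k) = T r m k := by
  unfold T
  rw [Nat.choose_symm hk, Nat.sub_sub_self hk]
  ring

lemma choose_le_two_pow (m k : ℕ) (hk : k ≤ m) : m.choose k ≤ 2 ^ m := by
  rw [← Nat.sum_range_choose m]
  exact Finset.single_le_sum (f := fun i => m.choose i) (fun i _ => Nat.zero_le _)
    (Finset.mem_range.mpr (by omega))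

lemma T_le_choose {r m k : ℕ} (hk : k ≤ m) : T r m k ≤ (m.choose k : ℝ) := by
  unfold T
  have h1 : (((k - r).factorial : ℝ) * (((m - k) - r).factorial : ℝ) /
      ((m - r).factorial : ℝ)) ≤ 1 := by
    rw [div_le_one (by positivity)]
    exact_mod_cast fact_ratio_le hk
  have h2 : (0:ℝ) ≤ (m.choose k : ℝ) := Nat.cast_nonneg _
  nlinarith

lemma descFactorial_pos {n k : ℕ} (h : k ≤ n) : 0 < n.descFactorial k :=
  Nat.pos_of_ne_zero fun hz =>
    absurd (Nat.descFactorial_eq_zero_iff_lt.mp hz) (by omega)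

set_option maxHeartbeats 1000000 in
/-- Key pointwise bound, in the half `2k ≤ m`. -/
lemma T_le_half {r m k : ℕ} (hr : 2 ≤ r) (hk : 2 * k ≤ m) :
    T r m k ≤ (Kn r : ℝ) / ((k : ℝ) + 1) ^ 2 := by
  have hkm : k ≤ m := by omega
  rcases lt_or_ge m (18 * r) with hm | hm
  · -- small m
    rw [le_div_iff₀ (by positivity)]
    have h1 : T r m k ≤ ((2:ℕ) ^ m : ℝ) :=
      (T_le_choose hkm).trans (by exact_mod_cast choose_le_two_pow m k hkm)
    have h2 : ((k:ℝ) + 1) ^ 2 ≤ (((9*r) ^ 2 : ℕ) : ℝ) := by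
      have h2a : (k:ℝ) + 1 ≤ ((9*r : ℕ) : ℝ) := by
        have : k + 1 ≤ 9 * r := by omega
        exact_mod_cast this
      push_cast at h2a ⊢
      nlinarith [h2a, (by positivity : (0:ℝ) ≤ (k:ℝ) + 1)]
    have h3 : ((2:ℕ) ^ m : ℝ) * (((9*r) ^ 2 : ℕ) : ℝ) ≤ (Kn r : ℝ) := by
      have : (2:ℕ) ^ m * (9*r) ^ 2 ≤ Kn r := by
        unfold Kn
        calc (2:ℕ) ^ m * (9*r) ^ 2 ≤ 2 ^ (18*r) * (9*r)^2 :=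
              Nat.mul_le_mul_right _ (Nat.pow_le_pow_right (by norm_num) (by omega))
          _ ≤ ((9 * r) ^ 2 * (8 * r).factorial) * 2 ^ (18 * r) := by
              have h4 : 1 ≤ (8*r).factorial := Nat.one_le_iff_ne_zero.mpr (Nat.factorial_ne_zero _)
              calc 2 ^ (18*r) * (9*r)^2 = (9*r)^2 * 2^(18*r) := by ring
                _ ≤ ((9 * r) ^ 2 * (8 * r).factorial) * 2 ^ (18 * r) := by
                    apply Nat.mul_le_mul_right
                    exact Nat.le_mul_of_pos_right _ (by omega)
          _ = Kn r := by unfold Kn; ring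
      exact_mod_cast this
    calc T r m k * ((k:ℝ)+1)^2 ≤ ((2:ℕ)^m : ℝ) * (((9*r)^2 : ℕ):ℝ) := by
          apply mul_le_mul h1 h2 (by positivity) (by positivity)
      _ ≤ (Kn r : ℝ) := h3
  rcases lt_or_ge k (8 * r) with hk8 | hk8
  · -- middle case : m large, k < 8r
    have hkr : k ≤ m - r := by omega
    have e1 : (m - r) - k = m - k - r := by omega
    have e2 : (m - r).factorial = ((m - k) - r).factorial * (m - r).descFactorial k := by
      rw [← Nat.factorial_mul_descFactorial hkr, e1]
    have hdpos : 0 < (m - r).descFactorial k := descFactorial_pos hkr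
    have hT : T r m k =
        ((m.choose k : ℝ) * ((k - r).factorial : ℝ)) / ((m - r).descFactorial k : ℝ) := by
      unfold T
      rw [e2]
      have hf : (((m - k) - r).factorial : ℝ) ≠ 0 := by positivity
      have hd : ((m - r).descFactorial k : ℝ) ≠ 0 := by
        exact_mod_cast hdpos.ne'
      push_cast
      field_simp
    have hm0 : (0:ℝ) < (m : ℝ) := by
      have : 0 < m := by omega
      exact_mod_cast this
    have hnum : (m.choose k : ℝ) * ((k - r).factorial : ℝ)
        ≤ ((m:ℝ)) ^ k * ((8*r).factorial : ℝ) := by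
      apply mul_le_mul _ _ (by positivity) (by positivity)
      · exact_mod_cast (Nat.choose_le_pow m k)
      · exact_mod_cast Nat.factorial_le (show k - r ≤ 8*r by omega)
    have hden : ((m:ℝ)/2) ^ k ≤ ((m - r).descFactorial k : ℝ) := by
      have hcast : ((m:ℝ)/2) ≤ (((m - r) + 1 - k : ℕ) : ℝ) := by
        rw [div_le_iff₀ (by norm_num)]
        have : m ≤ ((m - r) + 1 - k) * 2 := by omega
        exact_mod_cast this
      calc ((m:ℝ)/2) ^ k ≤ (((m - r) + 1 - k : ℕ) : ℝ) ^ k :=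
            pow_le_pow_left₀ (by positivity) hcast k
        _ ≤ ((m - r).descFactorial k : ℝ) := by
            exact_mod_cast Nat.pow_sub_le_descFactorial (m - r) k
    have hstep : T r m k ≤ ((m:ℝ)) ^ k * ((8*r).factorial : ℝ) / (((m:ℝ)/2) ^ k) := by
      rw [hT]
      exact div_le_div₀ (by positivity) hnum (by positivity) hden
    have heq : ((m:ℝ)) ^ k * ((8*r).factorial : ℝ) / (((m:ℝ)/2) ^ k)
        = ((8*r).factorial : ℝ) * 2 ^ k := by
      rw [div_pow]
      field_simp
    have hfin : ((8*r).factorial : ℝ) * 2 ^ k ≤ (Kn r : ℝ) / ((k:ℝ)+1)^2 := by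
      rw [le_div_iff₀ (by positivity)]
      have hnat : (8*r).factorial * 2 ^ k * (k+1)^2 ≤ Kn r := by
        unfold Kn
        calc (8*r).factorial * 2 ^ k * (k+1)^2
            ≤ (8*r).factorial * 2 ^ (18*r) * (9*r)^2 := by
              apply Nat.mul_le_mul
              apply Nat.mul_le_mul_left
              · exact Nat.pow_le_pow_right (by norm_num) (by omega)
              · have : k + 1 ≤ 9*r := by omega
                exact Nat.pow_le_pow_left this 2
          _ = (9 * r) ^ 2 * (8 * r).factorial * 2 ^ (18 * r) := by ring
      calc ((8*r).factorial : ℝ) * 2 ^ k * ((k:ℝ)+1)^2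
          = (((8*r).factorial * 2 ^ k * (k+1)^2 : ℕ) : ℝ) := by push_cast; ring
        _ ≤ (Kn r : ℝ) := by exact_mod_cast hnat
    calc T r m k ≤ ((m:ℝ)) ^ k * ((8*r).factorial : ℝ) / (((m:ℝ)/2) ^ k) := hstep
      _ = ((8*r).factorial : ℝ) * 2 ^ k := heq
      _ ≤ (Kn r : ℝ) / ((k:ℝ)+1)^2 := hfin
  · -- main case : 8r ≤ k ≤ m - k
    have hrk : r ≤ k := by omega
    have hrmk : r ≤ m - k := by omega
    have hrm : r ≤ m := by omega
    have h1 : (m - r).factorial * m.descFactorial r = m.factorial :=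
      Nat.factorial_mul_descFactorial hrm
    have h2 : (k - r).factorial * k.descFactorial r = k.factorial :=
      Nat.factorial_mul_descFactorial hrk
    have h3 : ((m - k) - r).factorial * (m - k).descFactorial r = (m - k).factorial :=
      Nat.factorial_mul_descFactorial hrmk
    have h4 : m.choose k * k.factorial * (m - k).factorial = m.factorial :=
      Nat.choose_mul_factorial_mul_factorial hkm
    have nat_id : m.choose k * ((k - r).factorial * ((m - k) - r).factorial) *
        (k.descFactorial r * (m - k).descFactorial r)
        = m.descFactorial r * (m - r).factorial := by
      calc m.choose k * ((k - r).factorial * ((m - k) - r).factorial) *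
            (k.descFactorial r * (m - k).descFactorial r)
          = m.choose k * ((k - r).factorial * k.descFactorial r) *
            (((m - k) - r).factorial * (m - k).descFactorial r) := by ring
        _ = m.choose k * k.factorial * (m - k).factorial := by rw [h2, h3]
        _ = m.factorial := h4
        _ = m.descFactorial r * (m - r).factorial := by rw [← h1]; ring
    have hdk : (0:ℝ) < (k.descFactorial r : ℝ) := by
      exact_mod_cast descFactorial_pos hrk
    have hdmk : (0:ℝ) < ((m - k).descFactorial r : ℝ) := by
      exact_mod_cast descFactorial_pos hrmk
    have hfr : (0:ℝ) < ((m - r).factorial : ℝ) := by positivity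
    have hT : T r m k = (m.descFactorial r : ℝ) /
        ((k.descFactorial r : ℝ) * ((m - k).descFactorial r : ℝ)) := by
      unfold T
      rw [mul_div_assoc']
      rw [div_eq_div_iff (by positivity) (by positivity)]
      have := congrArg (fun x : ℕ => (x : ℝ)) nat_id
      push_cast at this ⊢
      linear_combination this
    -- bound the descFactorial quotient
    set a : ℕ := k + 1 - r with ha
    set b : ℕ := (m - k) + 1 - r with hb
    have hapos : 0 < a := by omega
    have hbpos : 0 < b := by omega
    have hdenlow : ((a^r * b^r : ℕ) : ℝ) ≤
        (k.descFactorial r : ℝ) * ((m - k).descFactorial r : ℝ) := by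
      push_cast
      apply mul_le_mul _ _ (by positivity) (by positivity)
      · exact_mod_cast Nat.pow_sub_le_descFactorial k r
      · exact_mod_cast Nat.pow_sub_le_descFactorial (m - k) r
    have hnumup : (m.descFactorial r : ℝ) ≤ ((m^r : ℕ) : ℝ) := by
      exact_mod_cast Nat.descFactorial_le_pow m r
    have step1 : T r m k ≤ ((m^r : ℕ) : ℝ) / ((a^r * b^r : ℕ) : ℝ) := by
      rw [hT]
      apply div_le_div₀ (by positivity) hnumup _ hdenlow
      have : (0:ℕ) < a^r * b^r := by positivity
      exact_mod_cast this
    have hk16 : 16 ≤ k := by omega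
    have hmk : m * k ≤ 3 * a * b := by
      have h8a : 7 * k + 8 ≤ 8 * a := by omega
      have h8b : 7 * (m - k) + 8 ≤ 8 * b := by omega
      have hkc : k ≤ m - k := by omega
      have hmeq : m = k + (m - k) := by omega
      nlinarith [Nat.mul_le_mul h8a h8b, hkc, hapos, hbpos]
    have step2 : ((m^r : ℕ) : ℝ) / ((a^r * b^r : ℕ) : ℝ) ≤ (3:ℝ)^r / (k:ℝ)^r := by
      rw [div_le_div_iff₀ (by exact_mod_cast (by positivity : (0:ℕ) < a^r*b^r)) (by positivity)]
      have : (m * k)^r ≤ (3 * a * b)^r := Nat.pow_le_pow_left hmk r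
      calc ((m^r : ℕ) : ℝ) * (k:ℝ)^r = (((m*k)^r : ℕ) : ℝ) := by push_cast; ring
        _ ≤ (((3*a*b)^r : ℕ) : ℝ) := by exact_mod_cast this
        _ = (3:ℝ)^r * ((a^r * b^r : ℕ) : ℝ) := by push_cast; ring
    have step3 : (3:ℝ)^r / (k:ℝ)^r ≤ (9:ℝ) / (k:ℝ)^2 := by
      have hk0 : (0:ℝ) < (k:ℝ) := by exact_mod_cast (by omega : 0 < k)
      have h31 : (3:ℝ)/(k:ℝ) ≤ 1 := by
        rw [div_le_one hk0]
        exact_mod_cast (by omega : 3 ≤ k)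
      have := pow_le_pow_of_le_one (by positivity : (0:ℝ) ≤ (3:ℝ)/(k:ℝ)) h31 hr
      rw [div_pow, div_pow] at this
      have h9 : (9:ℝ) = 3 ^ 2 := by norm_num
      rw [h9]; exact this
    have step4 : (9:ℝ) / (k:ℝ)^2 ≤ (Kn r : ℝ) / ((k:ℝ)+1)^2 := by
      have hk0 : (0:ℝ) < (k:ℝ) := by exact_mod_cast (by omega : 0 < k)
      have hK36 : (36:ℝ) ≤ (Kn r : ℝ) := by
        have : 36 ≤ Kn r := by
          unfold Kn
          have h9 : 36 ≤ (9*r)^2 := by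
            calc 36 ≤ 18^2 := by norm_num
              _ ≤ (9*r)^2 := Nat.pow_le_pow_left (by omega) 2
          have h4 : 1 ≤ (8*r).factorial := Nat.one_le_iff_ne_zero.mpr (Nat.factorial_ne_zero _)
          have h5 : 1 ≤ 2^(18*r) := Nat.one_le_two_pow
          calc 36 ≤ (9*r)^2 := h9
            _ ≤ (9*r)^2 * ((8*r).factorial * 2^(18*r)) :=
                Nat.le_mul_of_pos_right _ (by positivity)
            _ = (9 * r) ^ 2 * (8 * r).factorial * 2 ^ (18 * r) := by ring
        exact_mod_cast this
      rw [div_le_div_iff₀ (by positivity) (by positivity)]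
      have hk1 : (1:ℝ) ≤ (k:ℝ) := by exact_mod_cast (by omega : 1 ≤ k)
      have h2k : ((k:ℝ)+1)^2 ≤ 4*(k:ℝ)^2 := by nlinarith
      calc (9:ℝ)*((k:ℝ)+1)^2 ≤ 9*(4*(k:ℝ)^2) := by linarith
        _ = 36*(k:ℝ)^2 := by ring
        _ ≤ (Kn r:ℝ)*(k:ℝ)^2 := mul_le_mul_of_nonneg_right hK36 (sq_nonneg _)
    calc T r m k ≤ ((m^r : ℕ) : ℝ) / ((a^r * b^r : ℕ) : ℝ) := step1
      _ ≤ (3:ℝ)^r / (k:ℝ)^r := step2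
      _ ≤ (9:ℝ) / (k:ℝ)^2 := step3
      _ ≤ (Kn r : ℝ) / ((k:ℝ)+1)^2 := step4

lemma T_le {r m k : ℕ} (hr : 2 ≤ r) (hk : k ≤ m) :
    T r m k ≤ (Kn r : ℝ) / (((min k (m - k) : ℕ) : ℝ) + 1) ^ 2 := by
  rcases le_or_gt (2 * k) m with h | h
  · have hmin : min k (m - k) = k := by omega
    rw [hmin]
    exact T_le_half hr h
  · have h2 : 2 * (m - k) ≤ m := by omega
    have hmin : min k (m - k) = m - k := by omega
    rw [hmin]
    calc T r m k = T r m (m - k) := (T_symm hk).symm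
      _ ≤ (Kn r : ℝ) / (((m - k : ℕ) : ℝ) + 1) ^ 2 := T_le_half hr h2

lemma sum_inv_sq (n : ℕ) : ∑ k ∈ range n, (1:ℝ)/((k:ℝ)+1)^2 ≤ 2 := by
  have H : ∀ n : ℕ, ∑ k ∈ range n, (1:ℝ)/((k:ℝ)+1)^2 ≤ 2 - 2/((n:ℝ)+1) := by
    intro n
    induction n with
    | zero => norm_num
    | succ n ih =>
      rw [Finset.sum_range_succ]
      have hn : (0:ℝ) < (n:ℝ) + 1 := by positivity
      have hn2 : (0:ℝ) < (n:ℝ) + 2 := by positivity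
      have key : (1:ℝ)/((n:ℝ)+1)^2 ≤ 2/((n:ℝ)+1) - 2/((n:ℝ)+2) := by
        rw [div_sub_div _ _ (ne_of_gt hn) (ne_of_gt hn2), div_le_div_iff₀ (by positivity) (by positivity)]
        nlinarith
      push_cast
      have e : ((n:ℝ)+1+1) = (n:ℝ)+2 := by ring
      rw [e]
      linarith [ih, key]
  calc ∑ k ∈ range n, (1:ℝ)/((k:ℝ)+1)^2 ≤ 2 - 2/((n:ℝ)+1) := H n
    _ ≤ 2 := by
      have h1 : (0:ℝ) < (n:ℝ)+1 := by positivity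
      have h2 := div_pos (by norm_num : (0:ℝ) < 2) h1
      linarith

lemma U_le {r : ℕ} (hr : 2 ≤ r) (m : ℕ) :
    ∑ k ∈ Finset.Iic m, T r m k ≤ 4 * (Kn r : ℝ) := by
  have hIic : Finset.Iic m = Finset.range (m+1) := by
    ext x; simp [Nat.lt_succ_iff]
  rw [hIic]
  have hKpos : (0:ℝ) ≤ (Kn r : ℝ) := Nat.cast_nonneg _
  calc ∑ k ∈ range (m+1), T r m k
      ≤ ∑ k ∈ range (m+1),
          ((Kn r : ℝ)/((k:ℝ)+1)^2 + (Kn r : ℝ)/(((m - k : ℕ):ℝ)+1)^2) := by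
        apply Finset.sum_le_sum
        intro k hk
        have hkm : k ≤ m := by
          simp only [Finset.mem_range, Nat.lt_succ_iff] at hk
          exact hk
        have hT := T_le hr hkm
        rcases Nat.le_total k (m - k) with hmin | hmin
        · have : min k (m - k) = k := min_eq_left hmin
          rw [this] at hT
          have h2 : (0:ℝ) ≤ (Kn r : ℝ)/(((m - k : ℕ):ℝ)+1)^2 := by positivity
          linarith
        · have : min k (m - k) = m - k := min_eq_right hmin
          rw [this] at hT
          have h2 : (0:ℝ) ≤ (Kn r : ℝ)/((k:ℝ)+1)^2 := by positivity
          linarith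
    _ = ∑ k ∈ range (m+1), (Kn r : ℝ)/((k:ℝ)+1)^2
        + ∑ k ∈ range (m+1), (Kn r : ℝ)/(((m - k : ℕ):ℝ)+1)^2 := Finset.sum_add_distrib
    _ = 2 * ∑ k ∈ range (m+1), (Kn r : ℝ)/((k:ℝ)+1)^2 := by
        have hrefl := Finset.sum_range_reflect (fun j => (Kn r : ℝ)/((j:ℝ)+1)^2) (m+1)
        simp only [Nat.add_sub_cancel] at hrefl
        have : ∑ k ∈ range (m+1), (Kn r : ℝ)/(((m - k : ℕ):ℝ)+1)^2
            = ∑ k ∈ range (m+1), (Kn r : ℝ)/((k:ℝ)+1)^2 := by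
          rw [← hrefl]
        rw [this]
        ring
    _ ≤ 2 * ((Kn r : ℝ) * 2) := by
        have : ∑ k ∈ range (m+1), (Kn r : ℝ)/((k:ℝ)+1)^2
            = (Kn r : ℝ) * ∑ k ∈ range (m+1), (1:ℝ)/((k:ℝ)+1)^2 := by
          rw [Finset.mul_sum]
          apply Finset.sum_congr rfl
          intro j hj
          rw [mul_one_div]
        rw [this]
        have := sum_inv_sq (m+1)
        nlinarith [hKpos, this]
    _ = 4 * (Kn r : ℝ) := by ring

end MorimotoAux

open MorimotoAux in
/-- Morimoto's combinatorial proposition, first part: for `ν ≥ 1` and `r ≥ 2`,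
the multi-index sum `∑_{α'+α''=α} (α!/(α'!α''!)) {(α'-r)!}^ν {(α''-r)!}^ν / {(α-r)!}^ν`
is bounded by a constant depending only on `n` and `r`.  Here `(α - r)! = ∏ᵢ (αᵢ - r)!`
with the convention `(k - r)! = 1` for `k < r` (truncated subtraction). -/
theorem stmt0 (ν : ℝ) (hν : 1 ≤ ν) (n r : ℕ) (hr : 2 ≤ r) (hn : 1 ≤ n) :
    ∃ B : ℝ, 0 < B ∧ ∀ α : Fin n → ℕ,
      ∑ α' ∈ Finset.Iic α,
        (∏ i, ((α i).choose (α' i)) : ℝ) *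
          ((∏ i, ((α' i - r).factorial : ℝ)) ^ ν *
            (∏ i, ((α i - α' i - r).factorial : ℝ)) ^ ν /
              (∏ i, ((α i - r).factorial : ℝ)) ^ ν) ≤ B := by
  have hK : (0:ℝ) < (Kn r : ℝ) := by exact_mod_cast Kn_pos r hr
  refine ⟨(4 * (Kn r : ℝ)) ^ n, pow_pos (by linarith) n, ?_⟩
  intro α
  have key : ∀ α' ∈ Finset.Iic α,
      (∏ i, ((α i).choose (α' i)) : ℝ) *
          ((∏ i, ((α' i - r).factorial : ℝ)) ^ ν *
            (∏ i, ((α i - α' i - r).factorial : ℝ)) ^ ν /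
              (∏ i, ((α i - r).factorial : ℝ)) ^ ν)
        ≤ ∏ i, T r (α i) (α' i) := by
    intro α' hα'
    have hle : ∀ i, α' i ≤ α i := Finset.mem_Iic.mp hα'
    set A : ℝ := ∏ i, ((α' i - r).factorial : ℝ) with hA
    set Bb : ℝ := ∏ i, ((α i - α' i - r).factorial : ℝ) with hB
    set C : ℝ := ∏ i, ((α i - r).factorial : ℝ) with hC
    have hApos : 0 < A := Finset.prod_pos fun i _ => by positivity
    have hBpos : 0 < Bb := Finset.prod_pos fun i _ => by positivity
    have hCpos : 0 < C := Finset.prod_pos fun i _ => by positivity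
    have hABC : A * Bb ≤ C := by
      rw [hA, hB, hC, ← Finset.prod_mul_distrib]
      apply Finset.prod_le_prod (fun i _ => by positivity)
      intro i _
      exact_mod_cast fact_ratio_le (hle i)
    have hx : A ^ ν * Bb ^ ν / C ^ ν = (A * Bb / C) ^ ν := by
      rw [← Real.mul_rpow hApos.le hBpos.le, ← Real.div_rpow (by positivity) hCpos.le]
    have hx1 : (A * Bb / C) ^ ν ≤ A * Bb / C := by
      have h0 : 0 < A * Bb / C := by positivity
      have h1 : A * Bb / C ≤ 1 := by
        rw [div_le_one hCpos]
        exact hABC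
      calc (A * Bb / C) ^ ν ≤ (A * Bb / C) ^ (1:ℝ) :=
            Real.rpow_le_rpow_of_exponent_ge h0 h1 hν
        _ = A * Bb / C := Real.rpow_one _
    have hchoose : (0:ℝ) ≤ ∏ i, ((α i).choose (α' i) : ℝ) :=
      Finset.prod_nonneg fun i _ => by positivity
    calc (∏ i, ((α i).choose (α' i)) : ℝ) * (A ^ ν * Bb ^ ν / C ^ ν)
        ≤ (∏ i, ((α i).choose (α' i)) : ℝ) * (A * Bb / C) := by
          rw [hx]
          exact mul_le_mul_of_nonneg_left hx1 hchoose
      _ = ∏ i, T r (α i) (α' i) := by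
          unfold T
          rw [Finset.prod_mul_distrib, hA, hB, hC, Finset.prod_div_distrib,
            Finset.prod_mul_distrib]
  calc ∑ α' ∈ Finset.Iic α,
        (∏ i, ((α i).choose (α' i)) : ℝ) *
          ((∏ i, ((α' i - r).factorial : ℝ)) ^ ν *
            (∏ i, ((α i - α' i - r).factorial : ℝ)) ^ ν /
              (∏ i, ((α i - r).factorial : ℝ)) ^ ν)
      ≤ ∑ α' ∈ Finset.Iic α, ∏ i, T r (α i) (α' i) := Finset.sum_le_sum key
    _ = ∏ i, ∑ k ∈ Finset.Iic (α i), T r (α i) k := by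
        have hpi : Finset.Iic α = Fintype.piFinset fun i => Finset.Iic (α i) := rfl
        rw [hpi]
        exact (Finset.prod_univ_sum _ _).symm
    _ ≤ (4 * (Kn r : ℝ)) ^ n := by
        have hstep : ∀ i : Fin n, ∑ k ∈ Finset.Iic (α i), T r (α i) k ≤ 4 * (Kn r : ℝ) :=
          fun i => U_le hr (α i)
        calc ∏ i, ∑ k ∈ Finset.Iic (α i), T r (α i) k
            ≤ ∏ _i : Fin n, (4 * (Kn r : ℝ)) := by
              apply Finset.prod_le_prod
              · exact fun i _ => Finset.sum_nonneg fun k _ => T_nonneg r (α i) k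
              · exact fun i _ => hstep i
          _ = (4 * (Kn r : ℝ)) ^ n := by
              rw [Finset.prod_const, Finset.card_univ, Fintype.card_fin]
end

section
/- Let l ≥ 2 be a real number. Then there exists C > 0 such that for all v, v₊ ∈ ℝ³, σ ∈ S² with post-collisional velocities v', v'₊ in the σ-representation and deviation angle θ, |W_{l-1}(v) - W_{l-1}(v')| ≤ C (θ W_{l-1}(v') W₁(v'₊) + θ^{l-1} W_{l-1}(v'₊)). -/
open scoped RealInnerProductSpace

private lemma bern12 {m a b : ℝ} (hm : 1 ≤ m) (hb : 1 ≤ b) (hba : b ≤ a) :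
    a ^ m - b ^ m ≤ m * a ^ (m - 1) * (a - b) := by
  have ha0 : (0:ℝ) < a := by linarith
  have hs : (-1:ℝ) ≤ (b - a) / a := by
    rw [le_div_iff₀ ha0]; linarith
  have key := one_add_mul_self_le_rpow_one_add hs hm
  have h1 : (1 + (b - a) / a) = b / a := by field_simp; ring
  rw [h1] at key
  have h2 : (b / a) ^ m = b ^ m / a ^ m := Real.div_rpow (by linarith) ha0.le m
  rw [h2] at key
  have h3 : (0:ℝ) < a ^ m := Real.rpow_pos_of_pos ha0 m
  have h4 : a ^ m * ((b - a) / a) = a ^ (m - 1) * (b - a) := by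
    rw [Real.rpow_sub ha0, Real.rpow_one]
    field_simp
  have h5 := mul_le_mul_of_nonneg_left key h3.le
  rw [mul_div_cancel₀ _ h3.ne'] at h5
  have h6 : a ^ m * (m * ((b - a) / a)) = m * (a ^ (m - 1) * (b - a)) := by
    calc a ^ m * (m * ((b - a) / a)) = m * (a ^ m * ((b - a) / a)) := by ring
      _ = m * (a ^ (m - 1) * (b - a)) := by rw [h4]
  rw [mul_add, mul_one, h6] at h5
  calc a ^ m - b ^ m ≤ -(m * (a ^ (m - 1) * (b - a))) := by linarith
    _ = m * a ^ (m - 1) * (a - b) := by ring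

private lemma rpow_diff12 {m a b d : ℝ} (hm : 1 ≤ m) (ha : 1 ≤ a) (hb : 1 ≤ b)
    (hab : |a - b| ≤ d) : |a ^ m - b ^ m| ≤ m * (b + d) ^ (m - 1) * d := by
  have hd0 : (0:ℝ) ≤ d := (abs_nonneg _).trans hab
  have habs := abs_le.1 hab
  rcases le_total b a with h | h
  · have h1 := bern12 hm hb h
    have h2 : a ≤ b + d := by linarith [habs.1]
    have h3 : a ^ (m - 1) ≤ (b + d) ^ (m - 1) :=
      Real.rpow_le_rpow (by linarith) h2 (by linarith)
    have h4 : (0:ℝ) ≤ a ^ m - b ^ m :=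
      sub_nonneg.2 (Real.rpow_le_rpow (by linarith) h (by linarith))
    rw [abs_of_nonneg h4]
    have h5 : a - b ≤ d := by linarith [habs.1]
    have h6 : (0:ℝ) ≤ a - b := by linarith
    calc a ^ m - b ^ m ≤ m * a ^ (m - 1) * (a - b) := h1
      _ ≤ m * (b + d) ^ (m - 1) * d := by
          refine mul_le_mul (mul_le_mul_of_nonneg_left h3 (by linarith)) h5 h6
            (mul_nonneg (by linarith) (Real.rpow_nonneg (by linarith) _))
  · have h1 := bern12 hm ha h
    have h3 : b ^ (m - 1) ≤ (b + d) ^ (m - 1) :=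
      Real.rpow_le_rpow (by linarith) (by linarith) (by linarith)
    have h4 : (0:ℝ) ≤ b ^ m - a ^ m :=
      sub_nonneg.2 (Real.rpow_le_rpow (by linarith) h (by linarith))
    rw [abs_sub_comm, abs_of_nonneg h4]
    have h5 : b - a ≤ d := by linarith [habs.2]
    have h6 : (0:ℝ) ≤ b - a := by linarith
    calc b ^ m - a ^ m ≤ m * b ^ (m - 1) * (b - a) := h1
      _ ≤ m * (b + d) ^ (m - 1) * d := by
          refine mul_le_mul (mul_le_mul_of_nonneg_left h3 (by linarith)) h5 h6
            (mul_nonneg (by linarith) (Real.rpow_nonneg (by linarith) _))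

private lemma sqrt_facts12 (x : ℝ) :
    1 ≤ Real.sqrt (1 + x ^ 2) ∧ x ≤ Real.sqrt (1 + x ^ 2) := by
  have h2 : Real.sqrt (1 + x ^ 2) ^ 2 = 1 + x ^ 2 := Real.sq_sqrt (by positivity)
  have h0 := Real.sqrt_nonneg (1 + x ^ 2)
  constructor
  · nlinarith [sq_nonneg x]
  · nlinarith [sq_nonneg (x - Real.sqrt (1 + x ^ 2))]

private lemma sqrt_lip12 {p q d : ℝ} (hp : 0 ≤ p) (hq : 0 ≤ q) (hd : 0 ≤ d) (h : p ≤ q + d) :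
    Real.sqrt (1 + p ^ 2) ≤ Real.sqrt (1 + q ^ 2) + d := by
  have hb2 : Real.sqrt (1 + q ^ 2) ^ 2 = 1 + q ^ 2 := Real.sq_sqrt (by positivity)
  have hb0 : 0 ≤ Real.sqrt (1 + q ^ 2) := Real.sqrt_nonneg _
  have hbq : q ≤ Real.sqrt (1 + q ^ 2) := by nlinarith
  have hkey : 1 + p ^ 2 ≤ (Real.sqrt (1 + q ^ 2) + d) ^ 2 := by
    nlinarith [mul_self_le_mul_self hp h, mul_nonneg hd (sub_nonneg.2 hbq)]
  calc Real.sqrt (1 + p ^ 2) ≤ Real.sqrt ((Real.sqrt (1 + q ^ 2) + d) ^ 2) :=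
        Real.sqrt_le_sqrt hkey
    _ = Real.sqrt (1 + q ^ 2) + d := Real.sqrt_sq (by positivity)

private lemma sqrt_prod12 {p q : ℝ} (hp : 0 ≤ p) (hq : 0 ≤ q) :
    p + q ≤ Real.sqrt (1 + p ^ 2) * Real.sqrt (1 + q ^ 2) := by
  have h1 : (p + q) ^ 2 ≤ (1 + p ^ 2) * (1 + q ^ 2) := by nlinarith [sq_nonneg (p * q - 1)]
  calc p + q = Real.sqrt ((p + q) ^ 2) := (Real.sqrt_sq (by positivity)).symm
    _ ≤ Real.sqrt ((1 + p ^ 2) * (1 + q ^ 2)) := Real.sqrt_le_sqrt h1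
    _ = _ := Real.sqrt_mul (by positivity) _

set_option maxHeartbeats 1000000 in
/-- Weight difference estimate (Lemma 2.3 of AMUXY): for real `l ≥ 2` there is `C > 0`
such that for all collision configurations (with `v' , v'₊` the σ-representation
post-collisional velocities and `θ ∈ [0, π/2]` the deviation angle),
`|W_{l-1}(v) - W_{l-1}(v')| ≤ C (θ W_{l-1}(v') W₁(v'₊) + θ^{l-1} W_{l-1}(v'₊))`,
where `W_m(u) = (1+|u|²)^{m/2}`. -/
theorem stmt12 (l : ℝ) (hl : 2 ≤ l) :
    ∃ C : ℝ, 0 < C ∧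
      ∀ v vs σ : EuclideanSpace ℝ (Fin 3), ‖σ‖ = 1 → v ≠ vs →
        Real.arccos ⟪‖v - vs‖⁻¹ • (v - vs), σ⟫ ≤ Real.pi / 2 →
        |(1 + ‖v‖ ^ 2) ^ ((l - 1) / 2) -
            (1 + ‖(2 : ℝ)⁻¹ • (v + vs) + (‖v - vs‖ / 2) • σ‖ ^ 2) ^ ((l - 1) / 2)| ≤
          C * (Real.arccos ⟪‖v - vs‖⁻¹ • (v - vs), σ⟫ *
                (1 + ‖(2 : ℝ)⁻¹ • (v + vs) + (‖v - vs‖ / 2) • σ‖ ^ 2) ^ ((l - 1) / 2) *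
                (1 + ‖(2 : ℝ)⁻¹ • (v + vs) - (‖v - vs‖ / 2) • σ‖ ^ 2) ^ ((1 : ℝ) / 2) +
              Real.arccos ⟪‖v - vs‖⁻¹ • (v - vs), σ⟫ ^ (l - 1) *
                (1 + ‖(2 : ℝ)⁻¹ • (v + vs) - (‖v - vs‖ / 2) • σ‖ ^ 2) ^ ((l - 1) / 2)) := by
  have hm : (1:ℝ) ≤ l - 1 := by linarith
  set m : ℝ := l - 1 with hmdef
  have hC5 : (0:ℝ) < 5 ^ m := Real.rpow_pos_of_pos (by norm_num) m
  refine ⟨m * 5 ^ m, mul_pos (by linarith) hC5, ?_⟩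
  intro v vs σ hσ hne hhalf
  set θ := Real.arccos ⟪‖v - vs‖⁻¹ • (v - vs), σ⟫ with hθdef
  set w1 := (2 : ℝ)⁻¹ • (v + vs) + (‖v - vs‖ / 2) • σ with hw1
  set w2 := (2 : ℝ)⁻¹ • (v + vs) - (‖v - vs‖ / 2) • σ with hw2
  set u := ‖v - vs‖⁻¹ • (v - vs) with hu
  have hD : (0:ℝ) < ‖v - vs‖ := by
    rw [norm_pos_iff]; exact sub_ne_zero.2 hne
  set D := ‖v - vs‖ with hDdef
  -- geometric facts
  have hun : ‖u‖ = 1 := by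
    rw [hu, norm_smul, norm_inv, norm_norm]
    field_simp
    exact div_self hD.ne'
  have hinner : |⟪u, σ⟫| ≤ 1 := by
    have := abs_real_inner_le_norm u σ
    rwa [hun, hσ, one_mul] at this
  have habs := abs_le.1 hinner
  have hθ0 : 0 ≤ θ := Real.arccos_nonneg _
  have hθpi : θ ≤ Real.pi := Real.arccos_le_pi _
  have hcos : Real.cos θ = ⟪u, σ⟫ := Real.cos_arccos habs.1 habs.2
  have husσ : ‖u - σ‖ ^ 2 = 2 - 2 * ⟪u, σ⟫ := by
    rw [norm_sub_sq_real, hun, hσ]; ring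
  -- 2 - 2 cos θ ≤ θ²
  have hsin_le : Real.sin (θ / 2) ≤ θ / 2 := Real.sin_le (by linarith)
  have hsin0 : 0 ≤ Real.sin (θ / 2) :=
    Real.sin_nonneg_of_nonneg_of_le_pi (by linarith) (by linarith [Real.pi_pos])
  have hsinsq : Real.sin (θ / 2) ^ 2 = (1 - Real.cos θ) / 2 := by
    rw [Real.sin_half_eq_sqrt (by linarith) (by linarith [Real.pi_pos])]
    exact Real.sq_sqrt (by nlinarith [Real.cos_le_one θ])
  have hcosb : 2 - 2 * Real.cos θ ≤ θ ^ 2 := by nlinarith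
  -- ‖u - σ‖ ≤ θ
  have huσθ : ‖u - σ‖ ≤ θ := by
    have h1 : ‖u - σ‖ ^ 2 ≤ θ ^ 2 := by rw [husσ, ← hcos]; linarith
    nlinarith [norm_nonneg (u - σ)]
  -- d = ‖v - w1‖ ≤ (θ/2) * D
  have hveq : v - w1 = (D / 2) • (u - σ) := by
    have h1 : (D / 2) • u = (2 : ℝ)⁻¹ • (v - vs) := by
      rw [hu, smul_smul]
      congr 1
      field_simp
    rw [smul_sub, h1, hw1]
    module
  have hdle : ‖v - w1‖ ≤ (θ / 2) * D := by
    rw [hveq, norm_smul, Real.norm_eq_abs, abs_of_nonneg (by positivity : (0:ℝ) ≤ D / 2)]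
    calc D / 2 * ‖u - σ‖ ≤ D / 2 * θ := by
          exact mul_le_mul_of_nonneg_left huσθ (by positivity)
      _ = θ / 2 * D := by ring
  -- D = ‖w1 - w2‖ and triangle facts
  have hw12 : w1 - w2 = D • σ := by rw [hw1, hw2]; module
  have hDnorm : D = ‖w1 - w2‖ := by rw [hw12, norm_smul, Real.norm_eq_abs, hσ, abs_of_nonneg hD.le, mul_one]
  have hDle : D ≤ ‖w1‖ + ‖w2‖ := by rw [hDnorm]; exact norm_sub_le _ _
  -- brackets
  set a := Real.sqrt (1 + ‖v‖ ^ 2) with ha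
  set b := Real.sqrt (1 + ‖w1‖ ^ 2) with hb
  set e := Real.sqrt (1 + ‖w2‖ ^ 2) with he
  have ha2 : a ^ 2 = 1 + ‖v‖ ^ 2 := Real.sq_sqrt (by positivity)
  have hb2 : b ^ 2 = 1 + ‖w1‖ ^ 2 := Real.sq_sqrt (by positivity)
  have he2 : e ^ 2 = 1 + ‖w2‖ ^ 2 := Real.sq_sqrt (by positivity)
  have ha1 : 1 ≤ a := (sqrt_facts12 ‖v‖).1
  have hb1 : 1 ≤ b := (sqrt_facts12 ‖w1‖).1
  have he1 : 1 ≤ e := (sqrt_facts12 ‖w2‖).1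
  have hbw : ‖w1‖ ≤ b := (sqrt_facts12 ‖w1‖).2
  have hew : ‖w2‖ ≤ e := (sqrt_facts12 ‖w2‖).2
  -- Lipschitz: |a - b| ≤ ‖v - w1‖
  have htri := abs_le.1 (abs_norm_sub_norm_le v w1)
  have hab : |a - b| ≤ ‖v - w1‖ := by
    rw [abs_le]
    constructor
    · have := sqrt_lip12 (norm_nonneg w1) (norm_nonneg v) (norm_nonneg (v - w1))
        (by linarith [htri.1])
      rw [← ha, ← hb] at this
      linarith
    · have := sqrt_lip12 (norm_nonneg v) (norm_nonneg w1) (norm_nonneg (v - w1))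
        (by linarith [htri.2])
      rw [← ha, ← hb] at this
      linarith
  have hDbe : D ≤ b * e :=
    hDle.trans ((sqrt_prod12 (norm_nonneg w1) (norm_nonneg w2)).trans_eq (by rw [hb, he]))
  -- rewrite goal in terms of a, b, e with rpow
  have hrw : ∀ x : ℝ, 0 ≤ x → (1 + x ^ 2) ^ ((l - 1) / 2) = Real.sqrt (1 + x ^ 2) ^ m := by
    intro x hx
    rw [Real.sqrt_eq_rpow, ← Real.rpow_mul (by positivity), hmdef]
    ring_nf
  have hE : (1 + ‖w2‖ ^ 2) ^ ((1:ℝ) / 2) = e := by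
    rw [he, Real.sqrt_eq_rpow]
  rw [hrw _ (norm_nonneg v), hrw _ (norm_nonneg w1), hrw _ (norm_nonneg w2), hE,
    ← ha, ← hb, ← he]
  -- main estimate
  set d := ‖v - w1‖ with hd
  have hd0 : (0:ℝ) ≤ d := norm_nonneg _
  have hmain : |a ^ m - b ^ m| ≤ m * (b + d) ^ (m - 1) * d := rpow_diff12 hm ha1 hb1 hab
  have hbm0 : (0:ℝ) < b ^ m := Real.rpow_pos_of_pos (by linarith) m
  have hθm0 : (0:ℝ) ≤ θ ^ m := Real.rpow_nonneg hθ0 m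
  have hem0 : (0:ℝ) < e ^ m := Real.rpow_pos_of_pos (by linarith) m
  have hbm1 : b ^ (m - 1) * b = b ^ m := by
    rw [← Real.rpow_add_one (by positivity : b ≠ 0)]
    ring_nf
  rcases le_total d b with hcase | hcase
  · -- Case 1 : d ≤ b
    have h1 : (b + d) ^ (m - 1) ≤ (2 * b) ^ (m - 1) :=
      Real.rpow_le_rpow (by linarith) (by linarith) (by linarith)
    have h2 : (2 * b) ^ (m - 1) = 2 ^ (m - 1) * b ^ (m - 1) :=
      Real.mul_rpow (by norm_num) (by linarith)
    have h3 : 2 ^ (m - 1) ≤ (5:ℝ) ^ m := by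
      calc (2:ℝ) ^ (m - 1) ≤ (5:ℝ) ^ (m - 1) :=
            Real.rpow_le_rpow (by norm_num) (by norm_num) (by linarith)
        _ ≤ (5:ℝ) ^ m := Real.rpow_le_rpow_of_exponent_le (by norm_num) (by linarith)
    have hdθ : d ≤ (θ / 2) * (b * e) := by
      calc d ≤ (θ / 2) * D := hdle
        _ ≤ (θ / 2) * (b * e) := mul_le_mul_of_nonneg_left hDbe (by linarith)
    have hbm1' : (0:ℝ) ≤ b ^ (m - 1) := Real.rpow_nonneg (by linarith) _
    have key : m * (b + d) ^ (m - 1) * d ≤ m * 5 ^ m * (θ * b ^ m * e) := by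
      calc m * (b + d) ^ (m - 1) * d
          ≤ m * (2 ^ (m - 1) * b ^ (m - 1)) * ((θ / 2) * (b * e)) := by
            refine mul_le_mul (mul_le_mul_of_nonneg_left (h1.trans_eq h2) (by linarith)) hdθ hd0
              (mul_nonneg (by linarith)
                (mul_nonneg (Real.rpow_nonneg (by norm_num) _) hbm1'))
        _ = (2 ^ (m - 1) / 2) * m * ((b ^ (m - 1) * b) * (θ * e)) := by ring
        _ = (2 ^ (m - 1) / 2) * m * (b ^ m * (θ * e)) := by rw [hbm1]
        _ ≤ 5 ^ m * m * (b ^ m * (θ * e)) := by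
            apply mul_le_mul_of_nonneg_right _ (by positivity)
            apply mul_le_mul_of_nonneg_right _ (by linarith)
            linarith [h3, Real.rpow_nonneg (show (0:ℝ) ≤ 2 by norm_num) (m - 1)]
        _ = m * 5 ^ m * (θ * b ^ m * e) := by ring
    calc |a ^ m - b ^ m| ≤ m * (b + d) ^ (m - 1) * d := hmain
      _ ≤ m * 5 ^ m * (θ * b ^ m * e) := key
      _ ≤ m * 5 ^ m * (θ * b ^ m * e + θ ^ m * e ^ m) := by
          apply mul_le_mul_of_nonneg_left _ (by positivity)
          linarith [mul_nonneg hθm0 hem0.le]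
  · -- Case 2 : b ≤ d
    have hd1 : (1:ℝ) ≤ d := hb1.trans hcase
    have h1 : (b + d) ^ (m - 1) ≤ (2 * d) ^ (m - 1) :=
      Real.rpow_le_rpow (by linarith) (by linarith) (by linarith)
    have h2 : (2 * d) ^ (m - 1) = 2 ^ (m - 1) * d ^ (m - 1) :=
      Real.mul_rpow (by norm_num) (by linarith)
    have hdm1 : d ^ (m - 1) * d = d ^ m := by
      rw [← Real.rpow_add_one (by positivity : d ≠ 0)]
      ring_nf
    -- D ≤ 5 e
    have hπ : Real.pi < 3.15 := Real.pi_lt_d2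
    have hw1small : ‖w1‖ ≤ 0.7875 * D := by
      calc ‖w1‖ ≤ b := hbw
        _ ≤ d := hcase
        _ ≤ (θ / 2) * D := hdle
        _ ≤ 0.7875 * D := mul_le_mul_of_nonneg_right (by linarith) hD.le
    have hw2big : 0.2125 * D ≤ ‖w2‖ := by
      have : D ≤ ‖w1‖ + ‖w2‖ := hDle
      linarith
    have hD5e : D ≤ 5 * e := by linarith
    have hd52 : d ≤ (5 / 2) * (θ * e) := by
      calc d ≤ (θ / 2) * D := hdle
        _ ≤ (θ / 2) * (5 * e) := mul_le_mul_of_nonneg_left hD5e (by linarith)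
        _ = (5 / 2) * (θ * e) := by ring
    have hdm : d ^ m ≤ (5 / 2) ^ m * (θ ^ m * e ^ m) := by
      calc d ^ m ≤ ((5 / 2) * (θ * e)) ^ m :=
            Real.rpow_le_rpow (by linarith) hd52 (by linarith)
        _ = (5 / 2) ^ m * (θ * e) ^ m := Real.mul_rpow (by norm_num) (by positivity)
        _ = (5 / 2) ^ m * (θ ^ m * e ^ m) := by rw [Real.mul_rpow hθ0 (by linarith)]
    have hc25 : 2 ^ (m - 1) * (5 / 2 : ℝ) ^ m ≤ 5 ^ m := by
      have h21 : (2:ℝ) ^ (m - 1) ≤ 2 ^ m :=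
        Real.rpow_le_rpow_of_exponent_le (by norm_num) (by linarith)
      have h52 : (0:ℝ) ≤ (5 / 2 : ℝ) ^ m := Real.rpow_nonneg (by norm_num) m
      calc (2:ℝ) ^ (m - 1) * (5 / 2 : ℝ) ^ m ≤ 2 ^ m * (5 / 2 : ℝ) ^ m :=
            mul_le_mul_of_nonneg_right h21 h52
        _ = ((2:ℝ) * (5 / 2)) ^ m := (Real.mul_rpow (by norm_num) (by norm_num)).symm
        _ = (5:ℝ) ^ m := by norm_num
    have key : m * (b + d) ^ (m - 1) * d ≤ m * 5 ^ m * (θ ^ m * e ^ m) := by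
      calc m * (b + d) ^ (m - 1) * d ≤ m * (2 ^ (m - 1) * d ^ (m - 1)) * d := by
            apply mul_le_mul_of_nonneg_right _ hd0
            exact mul_le_mul_of_nonneg_left (h1.trans_eq h2) (by linarith)
        _ = m * 2 ^ (m - 1) * (d ^ (m - 1) * d) := by ring
        _ = m * 2 ^ (m - 1) * d ^ m := by rw [hdm1]
        _ ≤ m * 2 ^ (m - 1) * ((5 / 2) ^ m * (θ ^ m * e ^ m)) := by
            apply mul_le_mul_of_nonneg_left hdm
            exact mul_nonneg (by linarith) (Real.rpow_nonneg (by norm_num) _)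
        _ = m * (2 ^ (m - 1) * (5 / 2) ^ m) * (θ ^ m * e ^ m) := by ring
        _ ≤ m * 5 ^ m * (θ ^ m * e ^ m) := by
            apply mul_le_mul_of_nonneg_right _ (mul_nonneg hθm0 hem0.le)
            exact mul_le_mul_of_nonneg_left hc25 (by linarith)
    calc |a ^ m - b ^ m| ≤ m * (b + d) ^ (m - 1) * d := hmain
      _ ≤ m * 5 ^ m * (θ ^ m * e ^ m) := key
      _ ≤ m * 5 ^ m * (θ * b ^ m * e + θ ^ m * e ^ m) := by
          apply mul_le_mul_of_nonneg_left _ (by positivity)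
          linarith [mul_nonneg (mul_nonneg hθ0 hbm0.le) (by linarith : (0:ℝ) ≤ e)]
end

section
/- Let l ≥ 1. There is C > 0 such that for all v, v₊ ∈ ℝ³, σ ∈ S² and the post-collisional velocity v' with deviation angle θ: |W_l(v) - W_l(v')| ≤ C θ |v - v₊| W_{l-1}(v) W_{l-1}(v₊). -/
open scoped RealInnerProductSpace

lemma aux_lip13 (l : ℝ) (hl : 1 ≤ l) (x y : ℝ) (hx : 0 ≤ x) (hy : 0 ≤ y) :
    |(1 + x ^ 2) ^ (l / 2) - (1 + y ^ 2) ^ (l / 2)| ≤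
      l * (1 + max x y ^ 2) ^ ((l - 1) / 2) * |x - y| := by
  set M := max x y with hM
  have hxM : x ∈ Set.Icc (0:ℝ) M := ⟨hx, le_max_left _ _⟩
  have hyM : y ∈ Set.Icc (0:ℝ) M := ⟨hy, le_max_right _ _⟩
  have key := Convex.norm_image_sub_le_of_norm_hasDerivWithin_le
    (f := fun u : ℝ => (1 + u ^ 2) ^ (l / 2))
    (f' := fun t : ℝ => 2 * t * (l / 2) * (1 + t ^ 2) ^ (l / 2 - 1))
    (C := l * (1 + M ^ 2) ^ ((l - 1) / 2)) (s := Set.Icc (0:ℝ) M)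
    (fun t _ => by
      have hpos : (0:ℝ) < 1 + t ^ 2 := by positivity
      have hf : HasDerivAt (fun u : ℝ => 1 + u ^ 2) (2 * t) t := by
        simpa using ((hasDerivAt_pow 2 t).const_add 1)
      exact (hf.rpow_const (Or.inl hpos.ne')).hasDerivWithinAt)
    (fun t ht => by
      have hpos : (0:ℝ) < 1 + t ^ 2 := by positivity
      have ht0 : 0 ≤ t := ht.1
      have htM : t ≤ M := ht.2
      have h1 : |2 * t * (l / 2) * (1 + t ^ 2) ^ (l / 2 - 1)|
          = l * (t * (1 + t ^ 2) ^ (l / 2 - 1)) := by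
        rw [abs_of_nonneg (by positivity)]; ring
      rw [Real.norm_eq_abs, h1]
      have ht1 : t ≤ (1 + t ^ 2) ^ ((1:ℝ)/2) := by
        rw [← Real.sqrt_eq_rpow]
        calc t = Real.sqrt (t ^ 2) := by rw [Real.sqrt_sq ht0]
        _ ≤ Real.sqrt (1 + t ^ 2) := Real.sqrt_le_sqrt (by linarith)
      have h2 : t * (1 + t ^ 2) ^ (l / 2 - 1) ≤ (1 + t ^ 2) ^ ((l - 1) / 2) := by
        calc t * (1 + t ^ 2) ^ (l / 2 - 1)
            ≤ (1 + t ^ 2) ^ ((1:ℝ)/2) * (1 + t ^ 2) ^ (l / 2 - 1) :=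
              mul_le_mul_of_nonneg_right ht1 (Real.rpow_nonneg hpos.le _)
          _ = (1 + t ^ 2) ^ ((l - 1) / 2) := by
              rw [← Real.rpow_add hpos]; ring_nf
      have h3 : (1 + t ^ 2 : ℝ) ^ ((l - 1) / 2) ≤ (1 + M ^ 2) ^ ((l - 1) / 2) := by
        apply Real.rpow_le_rpow hpos.le (by nlinarith) (by linarith)
      have hl0 : (0:ℝ) ≤ l := by linarith
      calc l * (t * (1 + t ^ 2) ^ (l / 2 - 1))
          ≤ l * (1 + t ^ 2) ^ ((l - 1) / 2) := by
            exact mul_le_mul_of_nonneg_left h2 hl0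
        _ ≤ l * (1 + M ^ 2) ^ ((l - 1) / 2) := mul_le_mul_of_nonneg_left h3 hl0)
    (convex_Icc _ _) hyM hxM
  simpa [Real.norm_eq_abs, abs_sub_comm] using key

/-- Commutator weight estimate via the Taylor formula: for `l ≥ 1` there is `C > 0` such
that for every collision configuration with post-collisional velocity
`v' = (v+v₊)/2 + (|v-v₊|/2)σ` and deviation angle `θ ∈ [0, π/2]`,
`|W_l(v) - W_l(v')| ≤ C θ |v - v₊| W_{l-1}(v) W_{l-1}(v₊)`, where `W_m(u) = ⟨u⟩^m`. -/
theorem stmt13 (l : ℝ) (hl : 1 ≤ l) :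
    ∃ C : ℝ, 0 < C ∧
      ∀ v vs σ : EuclideanSpace ℝ (Fin 3), ‖σ‖ = 1 → v ≠ vs →
        Real.arccos ⟪‖v - vs‖⁻¹ • (v - vs), σ⟫ ≤ Real.pi / 2 →
        |(1 + ‖v‖ ^ 2) ^ (l / 2) -
            (1 + ‖(2 : ℝ)⁻¹ • (v + vs) + (‖v - vs‖ / 2) • σ‖ ^ 2) ^ (l / 2)| ≤
          C * Real.arccos ⟪‖v - vs‖⁻¹ • (v - vs), σ⟫ * ‖v - vs‖ *
            (1 + ‖v‖ ^ 2) ^ ((l - 1) / 2) * (1 + ‖vs‖ ^ 2) ^ ((l - 1) / 2) := by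
  refine ⟨l * 2 ^ ((l - 1) / 2), by positivity, fun v vs σ hσ hne _ => ?_⟩
  set v' := (2 : ℝ)⁻¹ • (v + vs) + (‖v - vs‖ / 2) • σ with hv'
  set n := ‖v - vs‖⁻¹ • (v - vs) with hn
  set θ := Real.arccos ⟪n, σ⟫ with hθ
  have hvvs : (0:ℝ) < ‖v - vs‖ := by
    rw [norm_pos_iff]; exact sub_ne_zero_of_ne hne
  have hnnorm : ‖n‖ = 1 := by
    rw [hn, norm_smul, norm_inv, norm_norm, inv_mul_cancel₀ hvvs.ne']
  -- inner product bounds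
  have hinner : |⟪n, σ⟫| ≤ 1 := by
    calc |⟪n, σ⟫| ≤ ‖n‖ * ‖σ‖ := abs_real_inner_le_norm n σ
    _ = 1 := by rw [hnnorm, hσ, mul_one]
  have hcos : Real.cos θ = ⟪n, σ⟫ :=
    Real.cos_arccos (by linarith [abs_le.mp hinner]) (by linarith [abs_le.mp hinner])
  have hθ0 : 0 ≤ θ := Real.arccos_nonneg _
  -- ‖n - σ‖ ≤ θ
  have hns : ‖n - σ‖ ≤ θ := by
    have h1 : ‖n - σ‖ ^ 2 = 2 - 2 * ⟪n, σ⟫ := by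
      rw [norm_sub_sq_real, hnnorm, hσ]; ring
    have h2 : 1 - θ ^ 2 / 2 ≤ Real.cos θ := Real.one_sub_sq_div_two_le_cos
    rw [hcos] at h2
    nlinarith [norm_nonneg (n - σ)]
  -- v - v' = (‖v-vs‖/2) • (n - σ)
  have hdiff : v - v' = (‖v - vs‖ / 2) • (n - σ) := by
    rw [hv', hn, smul_sub, smul_smul]
    rw [div_mul_eq_mul_div, mul_inv_cancel₀ hvvs.ne']
    have : ((1:ℝ)/2) • (v - vs) = v - (2:ℝ)⁻¹ • (v + vs) := by
      rw [one_div]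
      have := smul_add (2:ℝ)⁻¹ v vs
      module
    rw [this]; abel
  have hdist : |‖v‖ - ‖v'‖| ≤ θ * ‖v - vs‖ := by
    calc |‖v‖ - ‖v'‖| ≤ ‖v - v'‖ := abs_norm_sub_norm_le v v'
    _ = ‖v - vs‖ / 2 * ‖n - σ‖ := by
        rw [hdiff, norm_smul, Real.norm_eq_abs, abs_of_nonneg (by positivity)]
    _ ≤ ‖v - vs‖ / 2 * θ := by
        exact mul_le_mul_of_nonneg_left hns (by positivity)
    _ ≤ θ * ‖v - vs‖ := by nlinarith
  -- weight bound
  have hv'norm : ‖v'‖ ≤ ‖v‖ + ‖vs‖ := by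
    calc ‖v'‖ ≤ ‖(2:ℝ)⁻¹ • (v + vs)‖ + ‖(‖v - vs‖ / 2) • σ‖ := norm_add_le _ _
    _ ≤ (2:ℝ)⁻¹ * (‖v‖ + ‖vs‖) + ‖v - vs‖ / 2 * 1 := by
        rw [norm_smul, norm_smul, Real.norm_eq_abs, Real.norm_eq_abs, hσ,
          abs_of_nonneg (by norm_num : (0:ℝ) ≤ (2:ℝ)⁻¹), abs_of_nonneg (by positivity)]
        gcongr
        exact norm_add_le _ _
    _ ≤ (2:ℝ)⁻¹ * (‖v‖ + ‖vs‖) + (‖v‖ + ‖vs‖) / 2 * 1 := by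
        gcongr; exact norm_sub_le _ _
    _ = ‖v‖ + ‖vs‖ := by ring
  have hmaxsq : 1 + (max ‖v‖ ‖v'‖) ^ 2 ≤ 2 * ((1 + ‖v‖ ^ 2) * (1 + ‖vs‖ ^ 2)) := by
    rcases max_cases ‖v‖ ‖v'‖ with ⟨h, _⟩ | ⟨h, _⟩ <;> rw [h]
    · nlinarith [norm_nonneg v, norm_nonneg vs]
    · nlinarith [norm_nonneg v, norm_nonneg vs, norm_nonneg v', sq_nonneg (‖v‖ - ‖vs‖)]
  have hp : (0:ℝ) ≤ (l - 1) / 2 := by linarith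
  have hsplit : (1 + (max ‖v‖ ‖v'‖) ^ 2) ^ ((l - 1) / 2) ≤
      2 ^ ((l - 1) / 2) * (1 + ‖v‖ ^ 2) ^ ((l - 1) / 2) * (1 + ‖vs‖ ^ 2) ^ ((l - 1) / 2) := by
    calc (1 + (max ‖v‖ ‖v'‖) ^ 2) ^ ((l - 1) / 2)
        ≤ (2 * ((1 + ‖v‖ ^ 2) * (1 + ‖vs‖ ^ 2))) ^ ((l - 1) / 2) :=
          Real.rpow_le_rpow (by positivity) hmaxsq hp
      _ = 2 ^ ((l - 1) / 2) * (1 + ‖v‖ ^ 2) ^ ((l - 1) / 2) * (1 + ‖vs‖ ^ 2) ^ ((l - 1) / 2) := by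
          rw [Real.mul_rpow (by norm_num) (by positivity),
            Real.mul_rpow (by positivity) (by positivity)]; ring
  calc |(1 + ‖v‖ ^ 2) ^ (l / 2) - (1 + ‖v'‖ ^ 2) ^ (l / 2)|
      ≤ l * (1 + (max ‖v‖ ‖v'‖) ^ 2) ^ ((l - 1) / 2) * |‖v‖ - ‖v'‖| :=
        aux_lip13 l hl ‖v‖ ‖v'‖ (norm_nonneg _) (norm_nonneg _)
    _ ≤ l * (2 ^ ((l - 1) / 2) * (1 + ‖v‖ ^ 2) ^ ((l - 1) / 2) * (1 + ‖vs‖ ^ 2) ^ ((l - 1) / 2))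
          * (θ * ‖v - vs‖) := by
        apply mul_le_mul
        · exact mul_le_mul_of_nonneg_left hsplit (by linarith)
        · simpa using hdist
        · exact abs_nonneg _
        · positivity
    _ = l * 2 ^ ((l - 1) / 2) * θ * ‖v - vs‖ *
          (1 + ‖v‖ ^ 2) ^ ((l - 1) / 2) * (1 + ‖vs‖ ^ 2) ^ ((l - 1) / 2) := by ring
end
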